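/- R_H(0,1,1) = { m² + mn + n² : m, n ∈ ℤ }, i.e. the set of integers represented in the network generated by the germ (0,1,1) is exactly the set of Löschian numbers. -/

import Mathlib

def H1 : ℤ × ℤ × ℤ → ℤ × ℤ × ℤ := fun t => (-t.1 + 1 + t.2.1 + t.2.2, t.2.1, t.2.2)
def H2 : ℤ × ℤ × ℤ → ℤ × ℤ × ℤ := fun t => (t.1, -t.2.1 + 1 + t.2.2 + t.1, t.2.2)
def H3 : ℤ × ℤ × ℤ → ℤ × ℤ × ℤ := fun t => (t.1, t.2.1, -t.2.2 + 1 + t.1 + t.2.1)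

/-- One step of the dynamics: apply one of `H1`, `H2`, `H3`. -/
def HStep (s t : ℤ × ℤ × ℤ) : Prop := t = H1 s ∨ t = H2 s ∨ t = H3 s

/-- The set of triples reachable from `(a,b,c)` by finitely many applications
of `H1`, `H2`, `H3` in any order. -/
def TH (a b c : ℤ) : Set (ℤ × ℤ × ℤ) := {t | Relation.ReflTransGen HStep (a, b, c) t}

/-- The set of integers represented as a component of a triple in `TH a b c`. -/
def RH (a b c : ℤ) : Set ℤ :=
  {r | ∃ t ∈ TH a b c, r = t.1 ∨ r = t.2.1 ∨ r = t.2.2}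

/-- Eisenstein norm. -/
def Nq (a b : ℤ) : ℤ := a ^ 2 - a * b + b ^ 2

lemma hs1 {x y z x' : ℤ} (h : x' = -x + 1 + y + z) : HStep (x, y, z) (x', y, z) :=
  Or.inl (by simp only [H1]; rw [h])

lemma hs2 {x y z y' : ℤ} (h : y' = -y + 1 + z + x) : HStep (x, y, z) (x, y', z) :=
  Or.inr (Or.inl (by simp only [H2]; rw [h]))

lemma hs3 {x y z z' : ℤ} (h : z' = -z + 1 + x + y) : HStep (x, y, z) (x, y, z') :=
  Or.inr (Or.inr (by simp only [H3]; rw [h]))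

/-- Invariant: triple of norms of an Eisenstein unit triangle. -/
def TriInv (t : ℤ × ℤ × ℤ) : Prop :=
  ∃ p₁ p₂ q₁ q₂ r₁ r₂ : ℤ,
    t = (Nq p₁ p₂, Nq q₁ q₂, Nq r₁ r₂) ∧
    Nq (q₁ - p₁) (q₂ - p₂) = 1 ∧ Nq (r₁ - p₁) (r₂ - p₂) = 1 ∧
    Nq (r₁ - q₁) (r₂ - q₂) = 1

lemma inv_step {s t : ℤ × ℤ × ℤ} (hs : TriInv s) (h : HStep s t) : TriInv t := by
  obtain ⟨p₁, p₂, q₁, q₂, r₁, r₂, hst, h1, h2, h3⟩ := hs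
  subst hst
  rcases h with h | h | h <;> subst h
  · refine ⟨q₁ + r₁ - p₁, q₂ + r₂ - p₂, q₁, q₂, r₁, r₂, ?_, ?_, ?_, h3⟩
    · have key : Nq (q₁ + r₁ - p₁) (q₂ + r₂ - p₂)
          = -Nq p₁ p₂ + 1 + Nq q₁ q₂ + Nq r₁ r₂ := by
        simp only [Nq] at *; linear_combination h1 + h2 - h3
      simp only [H1, key]
    · simp only [Nq] at *; linear_combination h2
    · simp only [Nq] at *; linear_combination h1
  · refine ⟨p₁, p₂, p₁ + r₁ - q₁, p₂ + r₂ - q₂, r₁, r₂, ?_, ?_, h2, ?_⟩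
    · have key : Nq (p₁ + r₁ - q₁) (p₂ + r₂ - q₂)
          = -Nq q₁ q₂ + 1 + Nq r₁ r₂ + Nq p₁ p₂ := by
        simp only [Nq] at *; linear_combination h1 + h3 - h2
      simp only [H2, key]
    · simp only [Nq] at *; linear_combination h3
    · simp only [Nq] at *; linear_combination h1
  · refine ⟨p₁, p₂, q₁, q₂, p₁ + q₁ - r₁, p₂ + q₂ - r₂, ?_, h1, ?_, ?_⟩
    · have key : Nq (p₁ + q₁ - r₁) (p₂ + q₂ - r₂)
          = -Nq r₁ r₂ + 1 + Nq p₁ p₂ + Nq q₁ q₂ := by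
        simp only [Nq] at *; linear_combination h2 + h3 - h1
      simp only [H3, key]
    · simp only [Nq] at *; linear_combination h3
    · simp only [Nq] at *; linear_combination h2

lemma inv_of_mem {t : ℤ × ℤ × ℤ} (h : t ∈ TH 0 1 1) : TriInv t := by
  induction h with
  | refl =>
      exact ⟨0, 0, 1, 0, 1, 1, by norm_num [Nq], by norm_num [Nq], by norm_num [Nq],
        by norm_num [Nq]⟩
  | tail _ hstep ih => exact inv_step ih hstep

/-- The canonical triangle anchored at `(a,b)`. -/
def TT (a b : ℤ) : ℤ × ℤ × ℤ := (Nq a b, Nq (a + 1) b, Nq (a + 1) (b + 1))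

lemma step_pe1 (a b : ℤ) : Relation.ReflTransGen HStep (TT a b) (TT (a + 1) (b - 1)) := by
  have s1 : HStep (Nq a b, Nq (a+1) b, Nq (a+1) (b+1))
      (Nq (a+2) (b+1), Nq (a+1) b, Nq (a+1) (b+1)) := hs1 (by simp only [Nq]; ring)
  have s2 : HStep (Nq (a+2) (b+1), Nq (a+1) b, Nq (a+1) (b+1))
      (Nq (a+2) (b+1), Nq (a+1) b, Nq (a+1+1) (b-1+1)) := hs3 (by simp only [Nq]; ring)
  have s3 : HStep (Nq (a+2) (b+1), Nq (a+1) b, Nq (a+1+1) (b-1+1))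
      (Nq (a+1) (b-1), Nq (a+1) b, Nq (a+1+1) (b-1+1)) := hs1 (by simp only [Nq]; ring)
  have s4 : HStep (Nq (a+1) (b-1), Nq (a+1) b, Nq (a+1+1) (b-1+1))
      (Nq (a+1) (b-1), Nq (a+1+1) (b-1), Nq (a+1+1) (b-1+1)) := hs2 (by simp only [Nq]; ring)
  exact .head s1 (.head s2 (.head s3 (.head s4 .refl)))

lemma step_me1 (a b : ℤ) : Relation.ReflTransGen HStep (TT a b) (TT (a - 1) (b + 1)) := by
  have s1 : HStep (Nq a b, Nq (a+1) b, Nq (a+1) (b+1))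
      (Nq a b, Nq (a-1+1) (b+1), Nq (a+1) (b+1)) := hs2 (by simp only [Nq]; ring)
  have s2 : HStep (Nq a b, Nq (a-1+1) (b+1), Nq (a+1) (b+1))
      (Nq (a+1) (b+2), Nq (a-1+1) (b+1), Nq (a+1) (b+1)) := hs1 (by simp only [Nq]; ring)
  have s3 : HStep (Nq (a+1) (b+2), Nq (a-1+1) (b+1), Nq (a+1) (b+1))
      (Nq (a+1) (b+2), Nq (a-1+1) (b+1), Nq (a-1+1) (b+1+1)) := hs3 (by simp only [Nq]; ring)
  have s4 : HStep (Nq (a+1) (b+2), Nq (a-1+1) (b+1), Nq (a-1+1) (b+1+1))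
      (Nq (a-1) (b+1), Nq (a-1+1) (b+1), Nq (a-1+1) (b+1+1)) := hs1 (by simp only [Nq]; ring)
  exact .head s1 (.head s2 (.head s3 (.head s4 .refl)))

lemma step_pe2 (a b : ℤ) : Relation.ReflTransGen HStep (TT a b) (TT (a + 1) (b + 2)) := by
  have s1 : HStep (Nq a b, Nq (a+1) b, Nq (a+1) (b+1))
      (Nq (a+2) (b+1), Nq (a+1) b, Nq (a+1) (b+1)) := hs1 (by simp only [Nq]; ring)
  have s2 : HStep (Nq (a+2) (b+1), Nq (a+1) b, Nq (a+1) (b+1))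
      (Nq (a+2) (b+1), Nq (a+1+1) (b+2), Nq (a+1) (b+1)) := hs2 (by simp only [Nq]; ring)
  have s3 : HStep (Nq (a+2) (b+1), Nq (a+1+1) (b+2), Nq (a+1) (b+1))
      (Nq (a+1) (b+2), Nq (a+1+1) (b+2), Nq (a+1) (b+1)) := hs1 (by simp only [Nq]; ring)
  have s4 : HStep (Nq (a+1) (b+2), Nq (a+1+1) (b+2), Nq (a+1) (b+1))
      (Nq (a+1) (b+2), Nq (a+1+1) (b+2), Nq (a+1+1) (b+2+1)) := hs3 (by simp only [Nq]; ring)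
  exact .head s1 (.head s2 (.head s3 (.head s4 .refl)))

lemma step_me2 (a b : ℤ) : Relation.ReflTransGen HStep (TT a b) (TT (a - 1) (b - 2)) := by
  have s1 : HStep (Nq a b, Nq (a+1) b, Nq (a+1) (b+1))
      (Nq a b, Nq (a+1) b, Nq (a-1+1) (b-2+1)) := hs3 (by simp only [Nq]; ring)
  have s2 : HStep (Nq a b, Nq (a+1) b, Nq (a-1+1) (b-2+1))
      (Nq (a+1) (b-1), Nq (a+1) b, Nq (a-1+1) (b-2+1)) := hs1 (by simp only [Nq]; ring)
  have s3 : HStep (Nq (a+1) (b-1), Nq (a+1) b, Nq (a-1+1) (b-2+1))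
      (Nq (a+1) (b-1), Nq (a-1+1) (b-2), Nq (a-1+1) (b-2+1)) := hs2 (by simp only [Nq]; ring)
  have s4 : HStep (Nq (a+1) (b-1), Nq (a-1+1) (b-2), Nq (a-1+1) (b-2+1))
      (Nq (a-1) (b-2), Nq (a-1+1) (b-2), Nq (a-1+1) (b-2+1)) := hs1 (by simp only [Nq]; ring)
  exact .head s1 (.head s2 (.head s3 (.head s4 .refl)))

lemma reach_row : ∀ c : ℤ, Relation.ReflTransGen HStep (0, 1, 1) (TT c (-c)) := by
  intro c
  induction c using Int.induction_on with
  | zero =>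
      have h : TT 0 (-0) = ((0 : ℤ), (1 : ℤ), (1 : ℤ)) := by norm_num [TT, Nq]
      rw [h]
  | succ k ih =>
      have h := ih.trans (step_pe1 k (-k))
      convert h using 2 <;> push_cast <;> ring
  | pred k ih =>
      have h := ih.trans (step_me1 (-k) (- -k))
      convert h using 2 <;> push_cast <;> ring

lemma reach_lattice :
    ∀ d c : ℤ, Relation.ReflTransGen HStep (0, 1, 1) (TT (c + d) (-c + 2 * d)) := by
  intro d
  induction d using Int.induction_on with
  | zero =>
      intro c
      have h := reach_row c
      convert h using 2 <;> ring
  | succ k ih =>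
      intro c
      have h := (ih c).trans (step_pe2 (c + k) (-c + 2 * k))
      convert h using 2 <;> push_cast <;> ring
  | pred k ih =>
      intro c
      have h := (ih c).trans (step_me2 (c + -k) (-c + 2 * -k))
      convert h using 2 <;> push_cast <;> ring

lemma reach_TT {a b : ℤ} (h : 3 ∣ a + b) : Relation.ReflTransGen HStep (0, 1, 1) (TT a b) := by
  obtain ⟨k, hk⟩ := h
  have h2 := reach_lattice k (a - k)
  rwa [show a - k + k = a by ring, show -(a - k) + 2 * k = b by omega] at h2

lemma Nq_mem_RH (a b : ℤ) : Nq a b ∈ RH 0 1 1 := by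
  have h3 : (a + b) % 3 = 0 ∨ (a + b) % 3 = 1 ∨ (a + b) % 3 = 2 := by omega
  rcases h3 with h | h | h
  · exact ⟨TT a b, reach_TT (by omega), Or.inl rfl⟩
  · refine ⟨TT (a - 1) b, reach_TT (by omega), Or.inr (Or.inl ?_)⟩
    show Nq a b = Nq (a - 1 + 1) b
    rw [show a - 1 + 1 = a by ring]
  · refine ⟨TT (a - 1) (b - 1), reach_TT (by omega), Or.inr (Or.inr ?_)⟩
    show Nq a b = Nq (a - 1 + 1) (b - 1 + 1)
    rw [show a - 1 + 1 = a by ring, show b - 1 + 1 = b by ring]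

theorem RH_011_eq_loeschian :
    RH 0 1 1 = {w : ℤ | ∃ m n : ℤ, w = m ^ 2 + m * n + n ^ 2} := by
  ext w
  constructor
  · rintro ⟨t, ht, hw⟩
    obtain ⟨p₁, p₂, q₁, q₂, r₁, r₂, hst, -, -, -⟩ := inv_of_mem ht
    subst hst
    rcases hw with h | h | h
    · exact ⟨p₁, -p₂, by simp only [Nq] at h; rw [h]; ring⟩
    · exact ⟨q₁, -q₂, by simp only [Nq] at h; rw [h]; ring⟩
    · exact ⟨r₁, -r₂, by simp only [Nq] at h; rw [h]; ring⟩
  · rintro ⟨m, n, hw⟩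
    have : w = Nq m (-n) := by simp only [Nq]; rw [hw]; ring
    rw [this]
    exact Nq_mem_RH m (-n)
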